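/- arXiv:2410.10475 — 8 statements merged into one kernel-verified Lean document; each statement's English description precedes it below -/
import Mathlib

section
/- A finite tournament with at least two vertices has exactly one king if and only if that king has an outgoing edge to every other vertex. -/
def IsTournament {V : Type*} (r : V → V → Prop) : Prop :=
  (∀ v, ¬ r v v) ∧ ∀ u v : V, u ≠ v → (r u v ↔ ¬ r v u)

def IsKing {V : Type*} (r : V → V → Prop) (v : V) : Prop :=
  ∀ u : V, u ≠ v → r v u ∨ ∃ w, r v w ∧ r w u

open Classical in
lemma exists_king {V : Type*} [Fintype V] [Nonempty V]
    (r : V → V → Prop) (hT : IsTournament r) : ∃ k : V, IsKing r k := by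
  classical
  obtain ⟨v, -, hv⟩ := Finset.exists_max_image Finset.univ
    (fun v => (Finset.univ.filter (fun u => r v u)).card) ⟨Classical.arbitrary V, Finset.mem_univ _⟩
  refine ⟨v, ?_⟩
  by_contra h
  simp only [IsKing, not_forall] at h
  obtain ⟨u, hu, hnot⟩ := h
  push_neg at hnot
  obtain ⟨hvu, hw⟩ := hnot
  have huv : r u v := by
    by_contra huv
    exact hvu ((hT.2 v u (Ne.symm hu)).mpr huv)
  have hsub : insert v (Finset.univ.filter (fun w => r v w)) ⊆
      Finset.univ.filter (fun w => r u w) := by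
    intro w hwmem
    rcases Finset.mem_insert.mp hwmem with rfl | hwmem
    · simp [huv]
    · simp only [Finset.mem_filter, Finset.mem_univ, true_and] at hwmem ⊢
      have hwu : w ≠ u := by rintro rfl; exact hvu hwmem
      by_contra huw
      exact hw w hwmem ((hT.2 w u hwu).mpr huw)
  have hvnot : v ∉ Finset.univ.filter (fun w => r v w) := by
    simp [hT.1 v]
  have : (Finset.univ.filter (fun w => r v w)).card + 1 ≤
      (Finset.univ.filter (fun w => r u w)).card := by
    calc (Finset.univ.filter (fun w => r v w)).card + 1
        = (insert v (Finset.univ.filter (fun w => r v w))).card := by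
          rw [Finset.card_insert_of_notMem hvnot]
      _ ≤ _ := Finset.card_le_card hsub
  have := hv u (Finset.mem_univ u)
  omega

theorem unique_king_iff_beats_all {V : Type*} [Fintype V]
    (r : V → V → Prop) (hT : IsTournament r) (hcard : 2 ≤ Fintype.card V) :
    (∃! k : V, IsKing r k) ↔ ∃ k : V, IsKing r k ∧ ∀ u : V, u ≠ k → r k u := by
  classical
  constructor
  · rintro ⟨k, hk, huniq⟩
    refine ⟨k, hk, ?_⟩
    by_contra h
    push_neg at h
    obtain ⟨u, hu, hku⟩ := h
    have huk : r u k := (hT.2 u k hu).mpr hku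
    -- the set of vertices beating k
    let B := {v : V // r v k}
    haveI : Nonempty B := ⟨⟨u, huk⟩⟩
    haveI : Fintype B := Fintype.ofFinite B
    let rB : B → B → Prop := fun a b => r a.1 b.1
    have hTB : IsTournament rB := by
      constructor
      · intro a; exact hT.1 a.1
      · intro a b hab
        exact hT.2 a.1 b.1 (fun h => hab (Subtype.ext h))
    obtain ⟨m, hm⟩ := exists_king rB hTB
    have hmk : r m.1 k := m.2
    have hmne : (m : V) ≠ k := by intro h; rw [h] at hmk; exact hT.1 k hmk
    -- m is a king of the whole tournament
    have hmking : IsKing r m.1 := by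
      intro x hx
      by_cases hxk : x = k
      · subst hxk; exact Or.inl hmk
      · by_cases hxB : r x k
        · rcases hm ⟨x, hxB⟩ (fun h => hx (congrArg Subtype.val h)) with h | ⟨w, hw1, hw2⟩
          · exact Or.inl h
          · exact Or.inr ⟨w.1, hw1, hw2⟩
        · have : r k x := (hT.2 k x (Ne.symm hxk)).mpr hxB
          exact Or.inr ⟨k, hmk, this⟩
    exact hmne (huniq m.1 hmking)
  · rintro ⟨k, hk, hbeats⟩
    refine ⟨k, hk, ?_⟩
    intro k' hk'
    by_contra hne
    -- k beats k', so ¬ r k' k; and k beats every w, so no w with r w k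
    rcases hk' k (Ne.symm hne) with h | ⟨w, hw1, hw2⟩
    · exact (hT.2 k k' (Ne.symm hne)).mp (hbeats k' hne) h
    · have hwk : w ≠ k := by rintro rfl; exact hT.1 _ hw2
      exact (hT.2 k w (Ne.symm hwk)).mp (hbeats w hwk) hw2
end

section
/- No finite tournament contains exactly two kings. -/
theorem exists_king_aux {V : Type*} [Fintype V] [Nonempty V]
    (r : V → V → Prop) (hT : IsTournament r) : ∃ v, IsKing r v := by
  classical
  obtain ⟨v, -, hv⟩ := Finset.exists_max_image Finset.univ
    (fun v => (Finset.univ.filter (fun u => r v u)).card) Finset.univ_nonempty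
  refine ⟨v, fun u hu => ?_⟩
  by_contra h
  push_neg at h
  obtain ⟨h1, h2⟩ := h
  have huv : r u v := (hT.2 u v hu).mpr h1
  have hsub : (Finset.univ.filter (fun w => r v w)) ⊂ (Finset.univ.filter (fun w => r u w)) := by
    constructor
    · intro w hw
      simp only [Finset.mem_filter, Finset.mem_univ, true_and] at hw ⊢
      have hwu : w ≠ u := by rintro rfl; exact h1 hw
      exact (hT.2 u w (Ne.symm hwu)).mpr (h2 w hw)
    · intro hcon
      have := hcon (Finset.mem_filter.mpr ⟨Finset.mem_univ v, huv⟩)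
      simp only [Finset.mem_filter, Finset.mem_univ, true_and] at this
      exact hT.1 v this
  have := Finset.card_lt_card hsub
  have := hv u (Finset.mem_univ u)
  omega

theorem two_kings_aux {V : Type*} [Fintype V]
    (r : V → V → Prop) (hT : IsTournament r) (a b : V) (hab : a ≠ b)
    (hkings : ∀ c, IsKing r c → c = a ∨ c = b)
    (ha : IsKing r a) (hba : r b a) : False := by
  classical
  have hnab : ¬ r a b := fun h => ((hT.2 a b hab).mp h) hba
  obtain ⟨w, haw, hwb⟩ : ∃ w, r a w ∧ r w b := by
    rcases ha b (Ne.symm hab) with h | h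
    · exact absurd h hnab
    · exact h
  haveI : Nonempty {x : V // r x b} := ⟨⟨w, hwb⟩⟩
  have hT' : IsTournament (fun x y : {x : V // r x b} => r x.1 y.1) :=
    ⟨fun x => hT.1 x.1, fun x y hxy => hT.2 x.1 y.1 (fun h => hxy (Subtype.ext h))⟩
  obtain ⟨c, hc⟩ := exists_king_aux _ hT'
  have hcking : IsKing r c.1 := by
    intro u hu
    by_cases hub : r u b
    · have hune : (⟨u, hub⟩ : {x : V // r x b}) ≠ c := fun h => hu (congrArg Subtype.val h)
      rcases hc ⟨u, hub⟩ hune with h | ⟨w', hw1, hw2⟩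
      · exact Or.inl h
      · exact Or.inr ⟨w'.1, hw1, hw2⟩
    · by_cases hub' : u = b
      · subst hub'; exact Or.inl c.2
      · exact Or.inr ⟨b, c.2, (hT.2 b u (Ne.symm hub')).mpr hub⟩
  rcases hkings c.1 hcking with h | h
  · have h2 := c.2; rw [h] at h2; exact hnab h2
  · have h2 := c.2; rw [h] at h2; exact hT.1 b h2

theorem not_exactly_two_kings {V : Type*} [Fintype V]
    (r : V → V → Prop) (hT : IsTournament r) :
    {v : V | IsKing r v}.ncard ≠ 2 := by
  intro h
  rw [Set.ncard_eq_two] at h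
  obtain ⟨a, b, hab, hset⟩ := h
  have ha : IsKing r a := by
    have : a ∈ {v : V | IsKing r v} := by rw [hset]; simp
    exact this
  have hb : IsKing r b := by
    have : b ∈ {v : V | IsKing r v} := by rw [hset]; simp
    exact this
  have hkings : ∀ c, IsKing r c → c = a ∨ c = b := by
    intro c hc
    have : c ∈ {v : V | IsKing r v} := hc
    rw [hset] at this
    simpa using this
  by_cases h : r a b
  · exact two_kings_aux r hT b a hab.symm (fun c hc => (hkings c hc).symm) hb h
  · exact two_kings_aux r hT a b hab hkings ha ((hT.2 b a hab.symm).mpr h)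
end

section
/- If a finite tournament has at least two distinct kings, then it has at least three distinct kings. -/
lemma king_in_finset {V : Type*} [Fintype V] (r : V → V → Prop)
    (hT : IsTournament r) (s : Finset V) (hs : s.Nonempty) :
    ∃ v ∈ s, ∀ u ∈ s, u ≠ v → r v u ∨ ∃ w ∈ s, r v w ∧ r w u := by
  classical
  obtain ⟨v, hv, hmax⟩ :=
    s.exists_max_image (fun v => (s.filter (fun w => r v w)).card) hs
  refine ⟨v, hv, ?_⟩
  by_contra h
  push_neg at h
  obtain ⟨u, hu, hune, hnvu, hnw⟩ := h
  have hruv : r u v := (hT.2 u v hune).mpr hnvu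
  have hsub : (s.filter (fun w => r v w)) ⊂ (s.filter (fun w => r u w)) := by
    constructor
    · intro w hw
      simp only [Finset.mem_filter] at hw ⊢
      obtain ⟨hws, hvw⟩ := hw
      have hwne : w ≠ u := by rintro rfl; exact hnvu hvw
      have : ¬ r w u := fun hwu => hnw w hws hvw hwu
      exact ⟨hws, (hT.2 u w (Ne.symm hwne)).mpr this⟩
    · intro hcontra
      have : v ∈ s.filter (fun w => r v w) := by
        apply hcontra
        simp [hv, hruv]
      simp only [Finset.mem_filter] at this
      exact hT.1 v this.2
  have := Finset.card_lt_card hsub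
  have := hmax u hu
  omega

lemma aux_three {V : Type*} [Fintype V]
    (r : V → V → Prop) (hT : IsTournament r) (k1 k2 : V)
    (h1 : IsKing r k1) (hne : k1 ≠ k2) (h21 : r k2 k1) :
    ∃ k3 : V, IsKing r k3 ∧ k3 ≠ k1 ∧ k3 ≠ k2 := by
  classical
  have hnk12 : ¬ r k1 k2 := fun h => ((hT.2 k2 k1 (Ne.symm hne)).mp h21) h
  set s : Finset V := Finset.univ.filter (fun v => r v k2) with hs
  have hsne : s.Nonempty := by
    rcases h1 k2 (Ne.symm hne) with h | ⟨w, hw1, hw2⟩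
    · exact absurd h hnk12
    · exact ⟨w, by simp [hs, hw2]⟩
  obtain ⟨k3, hk3s, hk3king⟩ := king_in_finset r hT s hsne
  have hk3beats : r k3 k2 := by simpa [hs] using hk3s
  have hk3ne2 : k3 ≠ k2 := by rintro rfl; exact hT.1 k3 hk3beats
  have hk3ne1 : k3 ≠ k1 := by rintro rfl; exact hnk12 hk3beats
  refine ⟨k3, ?_, hk3ne1, hk3ne2⟩
  intro u hu
  by_cases hu2 : u = k2
  · subst hu2; exact Or.inl hk3beats
  by_cases hus : r u k2
  · have hus' : u ∈ s := by simp [hs, hus]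
    rcases hk3king u hus' hu with h | ⟨w, _, hw1, hw2⟩
    · exact Or.inl h
    · exact Or.inr ⟨w, hw1, hw2⟩
  · have : r k2 u := (hT.2 k2 u (Ne.symm hu2)).mpr hus
    exact Or.inr ⟨k2, hk3beats, this⟩

theorem two_kings_implies_three {V : Type*} [Fintype V]
    (r : V → V → Prop) (hT : IsTournament r) (k1 k2 : V)
    (h1 : IsKing r k1) (h2 : IsKing r k2) (hne : k1 ≠ k2) :
    ∃ k3 : V, IsKing r k3 ∧ k3 ≠ k1 ∧ k3 ≠ k2 := by
  classical
  by_cases h21 : r k2 k1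
  · exact aux_three r hT k1 k2 h1 hne h21
  · have h12 : r k1 k2 := (hT.2 k1 k2 hne).mpr h21
    obtain ⟨k3, hk, h3, h4⟩ := aux_three r hT k2 k1 h2 (Ne.symm hne) h12
    exact ⟨k3, hk, h4, h3⟩
end

section
/- Let T be a finite tournament, let k1 be a king of T whose in-neighborhood N^c(k1) is nonempty, let k2 be a king of the subtournament induced on N^c(k1), and suppose the in-neighborhood N^c(k2) is nonempty. Then any king k3 of the subtournament induced on N^c(k2) is a king of T, and k1, k2, k3 are pairwise distinct. -/
/-- A king of the subtournament induced on `S`. -/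
def IsKingOn {V : Type*} (r : V → V → Prop) (S : Set V) (v : V) : Prop :=
  v ∈ S ∧ ∀ u ∈ S, u ≠ v → r v u ∨ ∃ w ∈ S, r v w ∧ r w u

theorem three_kings_construction {V : Type*} [Fintype V]
    (r : V → V → Prop) (hT : IsTournament r) (k1 k2 k3 : V)
    (h1 : IsKing r k1)
    (hne1 : {w : V | r w k1}.Nonempty)
    (h2 : IsKingOn r {w : V | r w k1} k2)
    (hne2 : {w : V | r w k2}.Nonempty)
    (h3 : IsKingOn r {w : V | r w k2} k3) :
    IsKing r k3 ∧ k1 ≠ k2 ∧ k1 ≠ k3 ∧ k2 ≠ k3 := by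
  obtain ⟨hirr, hasym⟩ := hT
  have h21 : r k2 k1 := h2.1
  have h32 : r k3 k2 := h3.1
  have hk12 : k1 ≠ k2 := fun h => hirr k1 (h ▸ h21)
  have hk23 : k2 ≠ k3 := fun h => hirr k2 (h ▸ h32)
  have hk13 : k1 ≠ k3 := by
    intro h
    subst h
    exact ((hasym k1 k2 hk12).1 h32) h21
  refine ⟨?_, hk12, hk13, hk23⟩
  intro u hu
  by_cases hu2 : u = k2
  · exact Or.inl (hu2 ▸ h32)
  · by_cases hru : r u k2
    · rcases h3.2 u hru hu with h | ⟨w, _, hw⟩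
      · exact Or.inl h
      · exact Or.inr ⟨w, hw⟩
    · have : r k2 u := ((hasym k2 u (Ne.symm hu2)).2 hru)
      exact Or.inr ⟨k2, h32, this⟩
end

section
/- Let T_n be a uniformly random tournament on n labeled vertices, i.e., for each pair of distinct vertices the orientation of the edge between them is chosen independently and uniformly at random. Then the probability that every vertex of T_n is a king tends to 1 as n tends to infinity. -/
set_option maxHeartbeats 1000000
set_option linter.unreachableTactic false
set_option linter.unusedTactic false


/-- The tournament on `Fin n` determined by a choice of orientation (a Boolean) for each
unordered pair, encoded as the ordered pairs `p` with `p.1 < p.2`: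
`true` orients the edge from the smaller to the larger index. -/
def tournamentOf {n : ℕ} (f : {p : Fin n × Fin n // p.1 < p.2} → Bool) :
    Fin n → Fin n → Prop :=
  fun u v => (∃ h : u < v, f ⟨(u, v), h⟩ = true) ∨ (∃ h : v < u, f ⟨(v, u), h⟩ = false)


attribute [local instance] Classical.propDecidable

variable {n : ℕ}

abbrev I (n : ℕ) := {p : Fin n × Fin n // p.1 < p.2}

def edge (a b : Fin n) (h : a ≠ b) : I n :=
  if h' : a < b then ⟨(a, b), h'⟩ else ⟨(b, a), h.lt_or_gt.resolve_left h'⟩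

lemma edge_inj {a b c d : Fin n} (hab : a ≠ b) (hcd : c ≠ d) :
    edge a b hab = edge c d hcd ↔ (a = c ∧ b = d) ∨ (a = d ∧ b = c) := by
  have h1 := hab.lt_or_gt
  have h2 := hcd.lt_or_gt
  unfold edge
  split_ifs <;>
    simp only [Subtype.mk.injEq, Prod.mk.injEq, Fin.ext_iff, ← Fin.val_fin_lt] at * <;> omega

def eI : I n ≃ Σ i : Fin n, Fin i.val where
  toFun p := ⟨p.1.2, ⟨p.1.1.val, p.2⟩⟩
  invFun x := ⟨(⟨x.2.val, lt_trans x.2.2 x.1.2⟩, x.1), x.2.2⟩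
  left_inv p := by ext <;> simp
  right_inv x := by ext <;> simp

lemma card_I : Fintype.card (I n) = n.choose 2 := by
  rw [Fintype.card_congr eI, Fintype.card_sigma]
  simp only [Fintype.card_fin]
  rw [Fin.sum_univ_eq_sum_range (fun i => i) n, Finset.sum_range_id, Nat.choose_two_right]

lemma arrow_iff (f : I n → Bool) {a b : Fin n} (h : a ≠ b) :
    tournamentOf f a b ↔ f (edge a b h) = decide (a < b) := by
  rcases h.lt_or_gt with h' | h'
  · simp [tournamentOf, edge, h', asymm h', h'.not_gt]
  · simp [tournamentOf, edge, h', asymm h', h'.not_gt]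

variable (u v : Fin n)

abbrev W (u v : Fin n) := {w : Fin n // w ≠ u ∧ w ≠ v}

lemma cardW (huv : u ≠ v) : Fintype.card (W u v) = n - 2 := by
  rw [Fintype.card_subtype]
  have h : (Finset.univ.filter fun w : Fin n => w ≠ u ∧ w ≠ v)
      = (Finset.univ.erase v).erase u := by
    ext w; simp [Finset.mem_erase, and_comm]
  rw [h, Finset.card_erase_of_mem (by simp [huv]), Finset.card_erase_of_mem (by simp)]
  simp; omega

def phi0 (huv : u ≠ v) : Unit ⊕ (W u v × Bool) → I n :=
  Sum.elim (fun _ => edge u v huv)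
    (fun wb => if wb.2 then edge v wb.1.1 (Ne.symm wb.1.2.2) else edge wb.1.1 u wb.1.2.1)

lemma phi0_inj (huv : u ≠ v) : Function.Injective (phi0 u v huv) := by
  rintro (⟨⟩ | ⟨⟨w, hw1, hw2⟩, b⟩) (⟨⟩ | ⟨⟨w', hw1', hw2'⟩, b'⟩) h <;>
      simp only [phi0, Sum.elim_inl, Sum.elim_inr] at h
  · rfl
  · cases b' <;> simp only [if_true, if_false, Bool.false_eq_true] at h <;>
      rw [edge_inj] at h <;>
      rcases h with ⟨h1, h2⟩ | ⟨h1, h2⟩ <;> simp_all <;> first | exact hw1' h1.symm | exact hw2' h2.symm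
  · cases b <;> simp only [if_true, if_false, Bool.false_eq_true] at h <;>
      rw [edge_inj] at h <;>
      rcases h with ⟨h1, h2⟩ | ⟨h1, h2⟩ <;> simp_all
  · cases b <;> cases b' <;> simp only [if_true, if_false, Bool.false_eq_true] at h <;>
      rw [edge_inj] at h <;>
      rcases h with ⟨h1, h2⟩ | ⟨h1, h2⟩ <;> simp_all

/-- The event that `v` cannot reach `u` in at most two steps. -/
def Bad (f : I n → Bool) : Prop :=
  ¬ tournamentOf f v u ∧ ∀ w, ¬ (tournamentOf f v w ∧ tournamentOf f w u)

lemma card_bad (hn : 2 ≤ n) (huv : u ≠ v) :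
    Nat.card {f : I n → Bool // Bad u v f} * 2 ^ (2 * n - 3) ≤
      3 ^ (n - 2) * 2 ^ n.choose 2 := by
  classical
  -- injection
  have key : Nat.card {f : I n → Bool // Bad u v f} ≤ Nat.card ((∀ w : W u v, {p : Bool × Bool // p ≠ (decide (v < w.1), decide (w.1 < u))}) × ({i : I n // i ∉ Set.range (phi0 u v huv)} → Bool)) := by
    apply Nat.card_le_card_of_injective
      (f := fun fh : {f : I n → Bool // Bad u v f} =>
        (⟨fun w => ⟨(fh.1 (edge v w.1 (Ne.symm w.2.2)), fh.1 (edge w.1 u w.2.1)), by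
            intro hp
            apply fh.2.2 w.1
            rw [arrow_iff fh.1 (Ne.symm w.2.2), arrow_iff fh.1 w.2.1]
            exact ⟨congrArg Prod.fst hp, congrArg Prod.snd hp⟩⟩,
          fun i => fh.1 i.1⟩ :
          (∀ w : W u v, {p : Bool × Bool // p ≠ (decide (v < w.1), decide (w.1 < u))}) ×
            ({i : I n // i ∉ Set.range (phi0 u v huv)} → Bool)))
    rintro ⟨f, hf⟩ ⟨g, hg⟩ h
    have h1 := congrArg Prod.fst h
    have h2 := congrArg Prod.snd h
    simp only at h1 h2
    ext i
    by_cases hi : i ∈ Set.range (phi0 u v huv)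
    · obtain ⟨x, rfl⟩ := hi
      rcases x with ⟨⟩ | ⟨w, b⟩
      · -- the edge u v, value forced by Bad
        have hbool : ∀ a b c : Bool, a ≠ c → b ≠ c → a = b := by decide
        have hfe : f (edge v u (Ne.symm huv)) ≠ decide (v < u) := fun hc =>
          hf.1 ((arrow_iff f (Ne.symm huv)).mpr hc)
        have hge : g (edge v u (Ne.symm huv)) ≠ decide (v < u) := fun hc =>
          hg.1 ((arrow_iff g (Ne.symm huv)).mpr hc)
        have he : edge v u (Ne.symm huv) = edge u v huv := by
          rw [edge_inj]; exact Or.inr ⟨rfl, rfl⟩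
        have := hbool _ _ _ hfe hge
        rw [he] at this
        simpa [phi0] using this
      · have := congrFun h1 w
        rw [Subtype.ext_iff, Prod.ext_iff] at this
        rcases b with _ | _ <;> simp only [phi0, Sum.elim_inr, if_true, if_false,
          Bool.false_eq_true] <;> [exact this.2; exact this.1]
    · exact congrFun h2 ⟨i, hi⟩
  -- cardinalities
  have hcardT : Nat.card ((∀ w : W u v, {p : Bool × Bool // p ≠ (decide (v < w.1), decide (w.1 < u))}) × ({i : I n // i ∉ Set.range (phi0 u v huv)} → Bool)) = 3 ^ (n - 2) * 2 ^ Fintype.card {i : I n // i ∉ Set.range (phi0 u v huv)} := by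
    rw [Nat.card_eq_fintype_card, Fintype.card_prod, Fintype.card_pi, Fintype.card_fun,
      Fintype.card_bool]
    congr 1
    have h3 : ∀ w : W u v,
        Fintype.card {p : Bool × Bool // p ≠ (decide (v < w.1), decide (w.1 < u))} = 3 := by
      intro w
      rw [Fintype.card_subtype_compl, Fintype.card_subtype_eq]
      simp
    calc (∏ w : W u v, Fintype.card
            {p : Bool × Bool // p ≠ (decide (v < w.1), decide (w.1 < u))})
        = ∏ _w : W u v, 3 := Finset.prod_congr rfl (fun w _ => h3 w)
      _ = 3 ^ Fintype.card (W u v) := by rw [Finset.prod_const, Finset.card_univ]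
      _ = 3 ^ (n - 2) := by rw [cardW u v huv]
  have hrange : Fintype.card {i : I n // i ∈ Set.range (phi0 u v huv)} = 2 * n - 3 := by
    rw [← Nat.card_eq_fintype_card]
    have := Nat.card_range_of_injective (phi0_inj u v huv)
    rw [this, Nat.card_eq_fintype_card, Fintype.card_sum, Fintype.card_prod,
      Fintype.card_unit, Fintype.card_bool, cardW u v huv]
    omega
  have hcardR : Fintype.card {i : I n // i ∉ Set.range (phi0 u v huv)} = n.choose 2 - (2 * n - 3) := by
    rw [Fintype.card_subtype_compl, hrange, card_I]
  have hle : 2 * n - 3 ≤ n.choose 2 := by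
    rw [← hrange, ← card_I, ← Nat.card_eq_fintype_card, ← Nat.card_eq_fintype_card]
    exact Nat.card_le_card_of_injective (fun i => i.1) Subtype.coe_injective
  calc Nat.card {f : I n → Bool // Bad u v f} * 2 ^ (2 * n - 3)
      ≤ Nat.card ((∀ w : W u v, {p : Bool × Bool // p ≠ (decide (v < w.1), decide (w.1 < u))}) × ({i : I n // i ∉ Set.range (phi0 u v huv)} → Bool)) * 2 ^ (2 * n - 3) := Nat.mul_le_mul_right _ key
    _ = 3 ^ (n - 2) * 2 ^ (Fintype.card {i : I n // i ∉ Set.range (phi0 u v huv)} + (2 * n - 3)) := by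
        rw [hcardT, pow_add]; ring
    _ = 3 ^ (n - 2) * 2 ^ n.choose 2 := by
        rw [hcardR, Nat.sub_add_cancel hle]

lemma card_allbad (hn : 2 ≤ n) :
    Nat.card {f : I n → Bool // ¬ ∀ v : Fin n, IsKing (tournamentOf f) v} * 2 ^ (2 * n - 3)
      ≤ n * n * (3 ^ (n - 2) * 2 ^ n.choose 2) := by
  classical
  rw [Nat.card_eq_fintype_card, Fintype.card_subtype]
  have hsub : (Finset.univ.filter fun f : I n → Bool => ¬ ∀ v : Fin n, IsKing (tournamentOf f) v)
      ⊆ (Finset.univ : Finset (Fin n)).offDiag.biUnion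
        (fun p => Finset.univ.filter fun f : I n → Bool => Bad p.1 p.2 f) := by
    intro f hf
    simp only [Finset.mem_filter, Finset.mem_univ, true_and] at hf
    obtain ⟨v, hv⟩ := not_forall.mp hf
    rw [IsKing] at hv
    push_neg at hv
    obtain ⟨u, hu, hvu, hw⟩ := hv
    apply Finset.mem_biUnion.mpr
    refine ⟨(u, v), ?_, ?_⟩
    · simp [Finset.mem_offDiag, hu]
    · simp only [Finset.mem_filter, Finset.mem_univ, true_and]
      exact ⟨hvu, fun w hw' => hw w hw'.1 hw'.2⟩
  calc (Finset.univ.filter fun f : I n → Bool =>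
          ¬ ∀ v : Fin n, IsKing (tournamentOf f) v).card * 2 ^ (2 * n - 3)
      ≤ ((Finset.univ : Finset (Fin n)).offDiag.biUnion
          (fun p => Finset.univ.filter fun f : I n → Bool => Bad p.1 p.2 f)).card
            * 2 ^ (2 * n - 3) :=
        Nat.mul_le_mul_right _ (Finset.card_le_card hsub)
    _ ≤ (∑ p ∈ (Finset.univ : Finset (Fin n)).offDiag,
          (Finset.univ.filter fun f : I n → Bool => Bad p.1 p.2 f).card) * 2 ^ (2 * n - 3) :=
        Nat.mul_le_mul_right _ (Finset.card_biUnion_le)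
    _ = ∑ p ∈ (Finset.univ : Finset (Fin n)).offDiag,
          (Finset.univ.filter fun f : I n → Bool => Bad p.1 p.2 f).card * 2 ^ (2 * n - 3) :=
        Finset.sum_mul _ _ _
    _ ≤ ∑ _p ∈ (Finset.univ : Finset (Fin n)).offDiag,
          3 ^ (n - 2) * 2 ^ n.choose 2 := by
        apply Finset.sum_le_sum
        intro p hp
        have hne : p.1 ≠ p.2 := (Finset.mem_offDiag.mp hp).2.2
        have := card_bad p.1 p.2 hn hne
        rwa [Nat.card_eq_fintype_card, Fintype.card_subtype] at this
    _ = (Finset.univ : Finset (Fin n)).offDiag.card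
          * (3 ^ (n - 2) * 2 ^ n.choose 2) := Finset.sum_const _
    _ ≤ n * n * (3 ^ (n - 2) * 2 ^ n.choose 2) := by
        apply Nat.mul_le_mul_right
        rw [Finset.offDiag_card]
        simp only [Finset.card_univ, Fintype.card_fin]
        omega

lemma card_good (n : ℕ) :
    Nat.card {f : I n → Bool // ¬ ∀ v : Fin n, IsKing (tournamentOf f) v} =
      2 ^ n.choose 2 -
        Nat.card {f : I n → Bool // ∀ v : Fin n, IsKing (tournamentOf f) v} := by
  classical
  rw [Nat.card_eq_fintype_card, Nat.card_eq_fintype_card, Fintype.card_subtype_compl,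
    Fintype.card_fun, Fintype.card_bool, card_I]

lemma good_le (n : ℕ) :
    Nat.card {f : I n → Bool // ∀ v : Fin n, IsKing (tournamentOf f) v} ≤ 2 ^ n.choose 2 := by
  classical
  have := Nat.card_le_card_of_injective
    (fun f : {f : I n → Bool // ∀ v : Fin n, IsKing (tournamentOf f) v} => f.1)
    Subtype.coe_injective
  rwa [Nat.card_eq_fintype_card (α := I n → Bool), Fintype.card_fun, Fintype.card_bool,
    card_I] at this



/-- In a uniformly random tournament on `n` labeled vertices, the probability that every
vertex is a king tends to `1` as `n → ∞`. The probability is expressed as the fraction of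
the `2 ^ (n choose 2)` equally likely orientations in which all vertices are kings. -/
theorem random_tournament_all_kings :
    Filter.Tendsto
      (fun n : ℕ =>
        (Nat.card {f : {p : Fin n × Fin n // p.1 < p.2} → Bool //
            ∀ v : Fin n, IsKing (tournamentOf f) v} : ℝ) / (2 ^ n.choose 2 : ℝ))
      Filter.atTop (nhds 1) := by
  classical
  have h0 : Filter.Tendsto (fun n : ℕ => (n : ℝ) ^ 2 * (3 / 4) ^ n) Filter.atTop (nhds 0) := by
    have h1 := tendsto_pow_const_div_const_pow_of_one_lt 2 (show (1:ℝ) < 4/3 by norm_num)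
    refine h1.congr fun n => ?_
    rw [div_eq_mul_inv, ← inv_pow]
    norm_num
  have hL : Filter.Tendsto (fun n : ℕ => 1 - 16/9 * ((n : ℝ) ^ 2 * (3 / 4) ^ n)) Filter.atTop (nhds 1) := by
    have h2 := tendsto_const_nhds (x := (1:ℝ)) (f := Filter.atTop (α := ℕ))
    have := h2.sub (h0.const_mul (16/9 : ℝ))
    simpa using this
  apply tendsto_of_tendsto_of_tendsto_of_le_of_le' hL tendsto_const_nhds
  · -- lower bound, eventually
    filter_upwards [Filter.eventually_ge_atTop 2] with n hn
    have hcompl := card_good n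
    have hGle := good_le n
    have hBle : Nat.card {f : I n → Bool // ¬ ∀ v : Fin n, IsKing (tournamentOf f) v}
        ≤ 2 ^ n.choose 2 := by omega
    have hG : Nat.card {f : I n → Bool // ∀ v : Fin n, IsKing (tournamentOf f) v}
        = 2 ^ n.choose 2 -
          Nat.card {f : I n → Bool // ¬ ∀ v : Fin n, IsKing (tournamentOf f) v} := by omega
    have hkey := card_allbad (n := n) hn
    have hkeyR : (Nat.card {f : I n → Bool // ¬ ∀ v : Fin n, IsKing (tournamentOf f) v} : ℝ)
        * 2 ^ (2 * n - 3) ≤ (n : ℝ) * n * (3 ^ (n - 2) * 2 ^ n.choose 2) := by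
      exact_mod_cast hkey
    have hBn : (Nat.card {f : I n → Bool // ¬ ∀ v : Fin n, IsKing (tournamentOf f) v} : ℝ)
        ≤ 16/9 * ((n : ℝ) ^ 2 * (3 / 4) ^ n) * 2 ^ n.choose 2 := by
      have hpow : (0:ℝ) < (2:ℝ) ^ (2 * n - 3) := by positivity
      rw [← mul_le_mul_iff_of_pos_right hpow]
      refine hkeyR.trans ?_
      obtain ⟨k, rfl⟩ : ∃ k, n = k + 2 := ⟨n - 2, by omega⟩
      have e1 : k + 2 - 2 = k := by omega
      have e2 : 2 * (k + 2) - 3 = 2 * k + 1 := by omega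
      rw [e1, e2]
      have h4 : (0:ℝ) < (4:ℝ) ^ k := by positivity
      have h3 : ((16:ℝ)/9) * (3/4) ^ (k + 2) * 2 ^ (2 * k + 1) = 2 * 3 ^ k := by
        rw [div_pow, pow_succ (2:ℝ) (2*k), pow_mul, pow_add, pow_add]
        field_simp
        ring
      have hs : (3:ℝ) ^ k ≤ ((16:ℝ)/9) * (3/4) ^ (k + 2) * 2 ^ (2 * k + 1) := by
        rw [h3]
        have : (0:ℝ) ≤ (3:ℝ) ^ k := by positivity
        linarith
      have hc : (0:ℝ) ≤ ((k + 2 : ℕ) : ℝ) ^ 2 * 2 ^ (k + 2).choose 2 := by positivity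
      calc ((k + 2 : ℕ) : ℝ) * ((k + 2 : ℕ) : ℝ) * (3 ^ k * 2 ^ (k + 2).choose 2)
          = (((k + 2 : ℕ) : ℝ) ^ 2 * 2 ^ (k + 2).choose 2) * 3 ^ k := by ring
        _ ≤ (((k + 2 : ℕ) : ℝ) ^ 2 * 2 ^ (k + 2).choose 2)
              * (((16:ℝ)/9) * (3/4) ^ (k + 2) * 2 ^ (2 * k + 1)) :=
            mul_le_mul_of_nonneg_left hs hc
        _ = 16/9 * (((k + 2 : ℕ) : ℝ) ^ 2 * (3 / 4) ^ (k + 2)) * 2 ^ (k + 2).choose 2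
              * 2 ^ (2 * k + 1) := by ring
    have hcast : (Nat.card {f : I n → Bool // ∀ v : Fin n, IsKing (tournamentOf f) v} : ℝ)
        = 2 ^ n.choose 2 -
          (Nat.card {f : I n → Bool // ¬ ∀ v : Fin n, IsKing (tournamentOf f) v} : ℝ) := by
      rw [hG, Nat.cast_sub hBle]
      push_cast
      ring
    rw [hcast, sub_div, div_self (by positivity : ((2:ℝ) ^ n.choose 2) ≠ 0)]
    apply sub_le_sub_left
    rw [div_le_iff₀ (by positivity : (0:ℝ) < (2:ℝ) ^ n.choose 2)]
    exact hBn
  · -- upper bound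
    refine Filter.Eventually.of_forall fun n => ?_
    rw [div_le_one (by positivity : (0:ℝ) < (2:ℝ) ^ n.choose 2)]
    exact_mod_cast good_le n
end

section
/- Let T be a finite tournament on vertex set V, let K ⊆ V, and let K² be the set of all vertices in V \ K that are within distance at most 2 (in T) of every vertex of K. Then every king of the subtournament induced on K² is a king of T. -/
/-- `v` is within distance at most 2 of `u`. -/
def Within2 {V : Type*} (r : V → V → Prop) (v u : V) : Prop :=
  v = u ∨ r v u ∨ ∃ w, r v w ∧ r w u

theorem king_of_Ksq_is_king {V : Type*} [Fintype V]
    (r : V → V → Prop) (hT : IsTournament r) (K : Set V) (v : V)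
    (hv : IsKingOn r {x : V | x ∉ K ∧ ∀ u ∈ K, Within2 r x u} v) :
    IsKing r v := by
  obtain ⟨⟨hvK, hvW⟩, hking⟩ := hv
  intro u hu
  by_cases huK : u ∈ K
  · rcases hvW u huK with h | h | ⟨w, h1, h2⟩
    · exact absurd h.symm hu
    · exact Or.inl h
    · exact Or.inr ⟨w, h1, h2⟩
  · by_cases huW : ∀ k ∈ K, Within2 r u k
    · rcases hking u ⟨huK, huW⟩ hu with h | ⟨w, _, h1, h2⟩
      · exact Or.inl h
      · exact Or.inr ⟨w, h1, h2⟩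
    · push_neg at huW
      obtain ⟨k, hkK, hnk⟩ := huW
      rw [Within2] at hnk
      push_neg at hnk
      obtain ⟨hne, hnr, hnw⟩ := hnk
      rcases hvW k hkK with h | h | ⟨w, h1, h2⟩
      · subst h
        by_cases hku : r v u
        · exact Or.inl hku
        · exact absurd ((hT.2 u v hne).mpr hku) hnr
      · -- r v k, and r k u since ¬ r u k
        by_cases hku : r k u
        · exact Or.inr ⟨k, h, hku⟩
        · exact absurd ((hT.2 u k hne).mpr hku) hnr
      · -- v → w → k; then u ≠ w and ¬ r u w, so r w u
        have huw : u ≠ w := by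
          rintro rfl
          exact hnr h2
        have hnuw : ¬ r u w := fun h' => hnw w h' h2
        have hwu : r w u := by
          by_cases hwu : r w u
          · exact hwu
          · exact absurd ((hT.2 u w huw).mpr hwu) hnuw
        exact Or.inr ⟨w, h1, hwu⟩
end

section
/- For every m ≥ 1 such that there exists a tournament on m vertices in which every vertex is a king, there exists a tournament T on 3m+3 vertices with the following properties: T has exactly 3 kings, and there exist at least m² (unordered) vertex pairs {x,y} such that reversing the orientation of the single edge between x and y yields a tournament with at least 4 kings. -/
/-- Reverse the orientation of the single edge between `x` and `y`, leaving all
other edges unchanged. -/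
def flipEdge {V : Type*} (r : V → V → Prop) (x y : V) : V → V → Prop :=
  fun a b =>
    ((a = x ∧ b = y) ∨ (a = y ∧ b = x) → ¬ r a b) ∧
    (¬ ((a = x ∧ b = y) ∨ (a = y ∧ b = x)) → r a b)

namespace SensAux

lemma f1 : ∀ i : Fin 3, ¬ i = i + 1 := by decide
lemma f2 : ∀ i j : Fin 3, i ≠ j → (j = i + 1 ↔ ¬ i = j + 1) := by decide
lemma f3 : ∀ i j : Fin 3, (j = i ∨ j = i + 1) ↔ ¬ i = j + 1 := by decide
lemma f4 : ∀ i j : Fin 3, j = i + 1 ↔ ¬ (i = j ∨ i = j + 1) := by decide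
lemma f5 : ∀ i j : Fin 3, j ≠ i → j ≠ i + 1 → j = i + 1 + 1 := by decide
lemma f6 : ∀ i j : Fin 3, ¬ (j = i ∨ j = i + 1) → j = i + 1 + 1 := by decide
lemma f7 : ∀ i j : Fin 3, j = i + 1 → i = j + 1 → False := by decide
lemma f9 : ∀ j : Fin 3, j ≠ 2 → j ≠ 1 → j = 0 := by decide

variable {m : ℕ}

abbrev W (m : ℕ) := Fin 3 ⊕ Fin 3 × Fin m

lemma inr_ne {i j : Fin 3} (hij : i ≠ j) (a b : Fin m) :
    (Sum.inr (i, a) : W m) ≠ Sum.inr (j, b) := by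
  intro h; injection h with h'; injection h' with h1 _; exact hij h1

def rel (q : Fin m → Fin m → Prop) : W m → W m → Prop
  | .inl i, .inl j => j = i + 1
  | .inl i, .inr (j, _) => j = i ∨ j = i + 1
  | .inr (i, _), .inl j => j = i + 1
  | .inr (i, v), .inr (j, w) => if i = j then q v w else j = i + 1

variable {q : Fin m → Fin m → Prop}

lemma rel_tour (hq : IsTournament q) : IsTournament (rel q) := by
  constructor
  · rintro (i | ⟨i, v⟩)
    · exact f1 i
    · show ¬ (if i = i then q v v else _)
      rw [if_pos rfl]; exact hq.1 v
  · rintro (i | ⟨i, v⟩) (j | ⟨j, w⟩) huv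
    · exact f2 i j (fun h => huv (by rw [h]))
    · exact f3 i j
    · exact f4 i j
    · show (if i = j then q v w else j = i + 1) ↔ ¬ (if j = i then q w v else i = j + 1)
      by_cases hij : i = j
      · subst hij
        rw [if_pos rfl, if_pos rfl]
        exact hq.2 v w (fun h => huv (by rw [h]))
      · rw [if_neg hij, if_neg (Ne.symm hij)]
        exact f2 i j hij

lemma king_inl (i : Fin 3) : IsKing (rel q) (Sum.inl i) := by
  rintro (j | ⟨j, w⟩) hu
  · by_cases h : j = i + 1
    · exact Or.inl h
    · exact Or.inr ⟨Sum.inl (i + 1), rfl, f5 i j (fun hji => hu (by rw [hji])) h⟩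
  · by_cases h : j = i ∨ j = i + 1
    · exact Or.inl h
    · exact Or.inr ⟨Sum.inl (i + 1), rfl, Or.inr (f6 i j h)⟩

lemma not_king_inr (i : Fin 3) (v : Fin m) : ¬ IsKing (rel q) (Sum.inr (i, v)) := by
  intro hk
  rcases hk (Sum.inl i) (by simp) with h | ⟨w, h1, h2⟩
  · exact f1 i h
  · match w with
    | .inl j => exact f7 i j h1 h2
    | .inr (j, u) =>
      have h2' : i = j + 1 := h2
      by_cases hij : i = j
      · subst hij; exact f1 i h2'
      · have h1' : j = i + 1 := by
          have : (if i = j then q v u else j = i + 1) := h1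
          rwa [if_neg hij] at this
        exact f7 i j h1' h2'

lemma flip_not {V : Type*} (r : V → V → Prop) (x y a b : V)
    (h : ¬ ((a = x ∧ b = y) ∨ (a = y ∧ b = x))) : flipEdge r x y a b ↔ r a b :=
  ⟨fun h' => h'.2 h, fun h' => ⟨fun c => absurd c h, fun _ => h'⟩⟩

lemma flip_yx {V : Type*} (r : V → V → Prop) (x y : V) (h : ¬ r y x) : flipEdge r x y y x :=
  ⟨fun _ => h, fun hn => absurd (Or.inr ⟨rfl, rfl⟩) hn⟩

section Flip
variable (v0 w0 : Fin m)

local notation "x0" => (Sum.inr (0, v0) : W m)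
local notation "y0" => (Sum.inr (1, w0) : W m)
local notation "r'" => flipEdge (rel q) x0 y0

lemma flip_left {a : W m} (h1 : a ≠ x0) (h2 : a ≠ y0) (b : W m) :
    r' a b ↔ rel q a b :=
  flip_not _ _ _ _ _ (by rintro (⟨h, -⟩ | ⟨h, -⟩); exacts [h1 h, h2 h])

lemma flip_right {b : W m} (h1 : b ≠ x0) (h2 : b ≠ y0) (a : W m) :
    r' a b ↔ rel q a b :=
  flip_not _ _ _ _ _ (by rintro (⟨-, h⟩ | ⟨-, h⟩); exacts [h2 h, h1 h])

lemma flip_ax_bx {a b : W m} (ha : a ≠ x0) (hb : b ≠ x0) : r' a b ↔ rel q a b :=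
  flip_not _ _ _ _ _ (by rintro (⟨h, -⟩ | ⟨-, h⟩); exacts [ha h, hb h])

lemma flip_inl_left (j : Fin 3) (b : W m) : r' (Sum.inl j) b ↔ rel q (Sum.inl j) b :=
  flip_left v0 w0 (fun h => Sum.inl_ne_inr h) (fun h => Sum.inl_ne_inr h) b

lemma king_inl_flip (i : Fin 3) : IsKing r' (Sum.inl i) := by
  rintro (j | ⟨j, w⟩) hu
  · by_cases h : j = i + 1
    · exact Or.inl ((flip_inl_left v0 w0 i _).mpr h)
    · exact Or.inr ⟨Sum.inl (i + 1), (flip_inl_left v0 w0 i _).mpr rfl,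
        (flip_inl_left v0 w0 (i + 1) _).mpr (f5 i j (fun hji => hu (by rw [hji])) h)⟩
  · by_cases h : j = i ∨ j = i + 1
    · exact Or.inl ((flip_inl_left v0 w0 i _).mpr h)
    · exact Or.inr ⟨Sum.inl (i + 1), (flip_inl_left v0 w0 i _).mpr rfl,
        (flip_inl_left v0 w0 (i + 1) _).mpr (Or.inr (f6 i j h))⟩

lemma king_y0_flip (hm : 0 < m) (hkq : ∀ v, IsKing q v) : IsKing r' (Sum.inr (1, w0)) := by
  set z0 : Fin m := ⟨0, hm⟩ with hz0
  have hb2 : ∀ b : W m, r' (Sum.inr (2, z0)) b ↔ rel q (Sum.inr (2, z0)) b :=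
    fun b => flip_left v0 w0 (inr_ne (by decide) _ _) (inr_ne (by decide) _ _) b
  have hy2 : r' y0 (Sum.inr (2, z0)) :=
    (flip_right v0 w0 (inr_ne (by decide) _ _) (inr_ne (by decide) _ _) _).mpr
      (by show (if (1 : Fin 3) = 2 then q w0 z0 else (2 : Fin 3) = 1 + 1)
          rw [if_neg (by decide)]; decide)
  rintro (j | ⟨j, u⟩) hu
  · by_cases h2 : j = 2
    · subst h2
      refine Or.inl ((flip_right v0 w0 (fun h => Sum.inl_ne_inr h)
        (fun h => Sum.inl_ne_inr h) _).mpr ?_)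
      show (2 : Fin 3) = 1 + 1; decide
    by_cases h1 : j = 1
    · subst h1
      refine Or.inr ⟨Sum.inr (0, v0), flip_yx _ _ _ ?_, ?_⟩
      · show ¬ (if (1 : Fin 3) = 0 then q w0 v0 else (0 : Fin 3) = 1 + 1)
        rw [if_neg (by decide)]; decide
      · refine (flip_right v0 w0 (fun h => Sum.inl_ne_inr h)
          (fun h => Sum.inl_ne_inr h) _).mpr ?_
        show (1 : Fin 3) = 0 + 1; decide
    · have h0 : j = 0 := f9 j h2 h1
      subst h0
      refine Or.inr ⟨Sum.inr (2, z0), hy2, (hb2 _).mpr ?_⟩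
      show (0 : Fin 3) = 2 + 1; decide
  · by_cases h2 : j = 2
    · subst h2
      refine Or.inl ((flip_right v0 w0 (inr_ne (by decide) _ _) (inr_ne (by decide) _ _) _).mpr ?_)
      show (if (1 : Fin 3) = 2 then q w0 u else (2 : Fin 3) = 1 + 1)
      rw [if_neg (by decide)]; decide
    by_cases h1 : j = 1
    · subst h1
      have huw : u ≠ w0 := by
        intro h; subst h; exact hu rfl
      have hflip1 : ∀ z z' : Fin m, r' (Sum.inr (1, z)) (Sum.inr (1, z')) ↔ q z z' := by
        intro z z'
        rw [flip_ax_bx v0 w0 (inr_ne (by decide) _ _) (inr_ne (by decide) _ _)]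
        show (if (1 : Fin 3) = 1 then q z z' else (1 : Fin 3) = 1 + 1) ↔ q z z'
        rw [if_pos rfl]
      rcases hkq w0 u huw with h | ⟨z, hz1, hz2⟩
      · exact Or.inl ((hflip1 w0 u).mpr h)
      · exact Or.inr ⟨Sum.inr (1, z), (hflip1 w0 z).mpr hz1, (hflip1 z u).mpr hz2⟩
    · have h0 : j = 0 := f9 j h2 h1
      subst h0
      refine Or.inr ⟨Sum.inr (2, z0), hy2, (hb2 _).mpr ?_⟩
      show (if (2 : Fin 3) = 0 then q z0 u else (0 : Fin 3) = 2 + 1)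
      rw [if_neg (by decide)]; decide

end Flip

lemma tour_comap {V U : Type*} (f : V → U) (hf : Function.Injective f)
    {r : U → U → Prop} (h : IsTournament r) : IsTournament (fun a b => r (f a) (f b)) :=
  ⟨fun v => h.1 (f v), fun u v huv => h.2 (f u) (f v) (fun c => huv (hf c))⟩

lemma isKing_comap {V U : Type*} (E : V ≃ U) (r : U → U → Prop) (v : V) :
    IsKing (fun a b => r (E a) (E b)) v ↔ IsKing r (E v) := by
  constructor
  · intro h u hu
    obtain ⟨u', rfl⟩ := E.surjective u
    rcases h u' (fun c => hu (by rw [c])) with h1 | ⟨w, h1, h2⟩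
    · exact Or.inl h1
    · exact Or.inr ⟨E w, h1, h2⟩
  · intro h u hu
    rcases h (E u) (fun c => hu (E.injective c)) with h1 | ⟨w, h1, h2⟩
    · exact Or.inl h1
    · exact Or.inr ⟨E.symm w, by simpa using h1, by simpa using h2⟩

lemma flip_comap {V U : Type*} (E : V ≃ U) (r : U → U → Prop) (X Y : U) (a b : V) :
    flipEdge (fun a b => r (E a) (E b)) (E.symm X) (E.symm Y) a b ↔
      flipEdge r X Y (E a) (E b) := by
  simp only [flipEdge, Equiv.eq_symm_apply]

lemma four_le_card {α : Type*} [Finite α] {P : α → Prop} (a b c d : α)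
    (ha : P a) (hb : P b) (hc : P c) (hd : P d)
    (h1 : a ≠ b) (h2 : a ≠ c) (h3 : a ≠ d) (h4 : b ≠ c) (h5 : b ≠ d) (h6 : c ≠ d) :
    4 ≤ Nat.card {x // P x} := by
  have hsub : ({a, b, c, d} : Set α) ⊆ {x | P x} := by
    rintro x (rfl | rfl | rfl | rfl) <;> assumption
  have hcard : ({a, b, c, d} : Set α).ncard = 4 := by
    rw [Set.ncard_insert_of_notMem (by simp [h1, h2, h3]),
      Set.ncard_insert_of_notMem (by simp [h4, h5]),
      Set.ncard_insert_of_notMem (by simp [h6]), Set.ncard_singleton]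
  calc 4 = ({a, b, c, d} : Set α).ncard := hcard.symm
    _ ≤ ({x | P x} : Set α).ncard := Set.ncard_le_ncard hsub (Set.toFinite _)
    _ = Nat.card {x // P x} := (Nat.card_coe_set_eq _).symm

end SensAux

open SensAux in
theorem sensitive_tournament_exists (m : ℕ) (hm : 1 ≤ m)
    (hall : ∃ r : Fin m → Fin m → Prop, IsTournament r ∧ ∀ v : Fin m, IsKing r v) :
    ∃ r : Fin (3 * m + 3) → Fin (3 * m + 3) → Prop,
      IsTournament r ∧
      Nat.card {v : Fin (3 * m + 3) // IsKing r v} = 3 ∧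
      ∃ P : Finset (Sym2 (Fin (3 * m + 3))),
        m ^ 2 ≤ P.card ∧
        ∀ x y : Fin (3 * m + 3), s(x, y) ∈ P →
          x ≠ y ∧ 4 ≤ Nat.card {v : Fin (3 * m + 3) // IsKing (flipEdge r x y) v} := by
  classical
  obtain ⟨q, hq, hkq⟩ := hall
  have hcard : Fintype.card (W m) = 3 * m + 3 := by
    simp [Fintype.card_sum, Fintype.card_prod]
    omega
  let e : W m ≃ Fin (3 * m + 3) := Fintype.equivFinOfCardEq hcard
  set E : Fin (3 * m + 3) ≃ W m := e.symm with hE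
  refine ⟨fun a b => rel q (E a) (E b), tour_comap E E.injective (rel_tour hq), ?_, ?_⟩
  · -- exactly three kings
    have hchar : ∀ v, IsKing (fun a b => rel q (E a) (E b)) v ↔ ∃ i : Fin 3, v = e (Sum.inl i) := by
      intro v
      rw [isKing_comap E (rel q) v]
      constructor
      · intro h
        rcases hEv : E v with i | ⟨i, u⟩
        · exact ⟨i, by rw [← hEv]; simp [hE]⟩
        · rw [hEv] at h
          exact absurd h (not_king_inr i u)
      · rintro ⟨i, rfl⟩
        have : E (e (Sum.inl i)) = Sum.inl i := by simp [hE]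
        rw [this]
        exact king_inl i
    let f : Fin 3 → {v : Fin (3 * m + 3) // IsKing (fun a b => rel q (E a) (E b)) v} :=
      fun i => ⟨e (Sum.inl i), (hchar _).mpr ⟨i, rfl⟩⟩
    have hbij : Function.Bijective f := by
      constructor
      · intro i j hij
        have := congrArg Subtype.val hij
        have := e.injective this
        exact Sum.inl.inj this
      · rintro ⟨v, hv⟩
        obtain ⟨i, rfl⟩ := (hchar v).mp hv
        exact ⟨i, rfl⟩
    exact Nat.card_eq_of_equiv_fin (Equiv.ofBijective f hbij).symm
  · -- the sensitive pairs
    refine ⟨Finset.image (fun p : Fin m × Fin m =>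
      s(e (Sum.inr (0, p.1)), e (Sum.inr (1, p.2)))) Finset.univ, ?_, ?_⟩
    · have hinj : Function.Injective (fun p : Fin m × Fin m =>
          s(e (Sum.inr (0, p.1)), e (Sum.inr (1, p.2)))) := by
        rintro ⟨a1, a2⟩ ⟨b1, b2⟩ h
        simp only [Sym2.eq, Sym2.rel_iff', Prod.mk.injEq, Prod.swap_prod_mk] at h
        rcases h with ⟨h1, h2⟩ | ⟨h1, h2⟩
        · have h1' := e.injective h1
          have h2' := e.injective h2
          injection h1' with h1''
          injection h2' with h2''
          injection h1'' with _ ha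
          injection h2'' with _ hb
          exact Prod.ext ha hb
        · have h1' := e.injective h1
          injection h1' with h1''
          injection h1'' with hc _
          exact absurd hc (by decide)
      rw [Finset.card_image_of_injective _ hinj]
      simp [sq]
    · intro x y hxy
      simp only [Finset.mem_image, Finset.mem_univ, true_and] at hxy
      obtain ⟨⟨a, b⟩, hp⟩ := hxy
      rw [Sym2.eq_iff] at hp
      -- in both cases, the flipped relation is the same
      have key : ∀ x' y' : Fin (3 * m + 3), x' = e (Sum.inr (0, a)) → y' = e (Sum.inr (1, b)) →
          x' ≠ y' ∧ 4 ≤ Nat.card {v : Fin (3 * m + 3) //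
            IsKing (flipEdge (fun a b => rel q (E a) (E b)) x' y') v} := by
        rintro x' y' rfl rfl
        constructor
        · exact e.injective.ne (inr_ne (by decide) _ _)
        · have hrw : ∀ z : W m, IsKing (flipEdge (fun a b => rel q (E a) (E b))
              (e (Sum.inr (0, a))) (e (Sum.inr (1, b)))) (e z) ↔
              IsKing (flipEdge (rel q) (Sum.inr (0, a)) (Sum.inr (1, b))) z := by
            intro z
            have heq : ∀ u v : Fin (3 * m + 3),
                flipEdge (fun a b => rel q (E a) (E b)) (e (Sum.inr (0, a)))
                  (e (Sum.inr (1, b))) u v ↔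
                flipEdge (rel q) (Sum.inr (0, a)) (Sum.inr (1, b)) (E u) (E v) := by
              intro u v
              have h1 : e (Sum.inr (0, a)) = E.symm (Sum.inr (0, a)) := by simp [hE]
              have h2 : e (Sum.inr (1, b)) = E.symm (Sum.inr (1, b)) := by simp [hE]
              rw [h1, h2]
              exact flip_comap E (rel q) _ _ u v
            have h3 : (flipEdge (fun a b => rel q (E a) (E b)) (e (Sum.inr (0, a)))
                (e (Sum.inr (1, b)))) = fun u v =>
                flipEdge (rel q) (Sum.inr (0, a)) (Sum.inr (1, b)) (E u) (E v) :=
              funext fun u => funext fun v => propext (heq u v)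
            rw [h3, isKing_comap E _ (e z)]
            have h4 : E (e z) = z := by simp [hE]
            rw [h4]
          have k0 := (hrw _).mpr (king_inl_flip a b 0)
          have k1 := (hrw _).mpr (king_inl_flip a b 1)
          have k2 := (hrw _).mpr (king_inl_flip a b 2)
          have ky := (hrw _).mpr (king_y0_flip a b hm hkq)
          have ne01 : e (Sum.inl (0 : Fin 3)) ≠ e (Sum.inl 1) :=
            e.injective.ne (by intro h; injection h with h'; exact absurd h' (by decide))
          have ne02 : e (Sum.inl (0 : Fin 3)) ≠ e (Sum.inl 2) :=
            e.injective.ne (by intro h; injection h with h'; exact absurd h' (by decide))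
          have ne12 : e (Sum.inl (1 : Fin 3)) ≠ e (Sum.inl 2) :=
            e.injective.ne (by intro h; injection h with h'; exact absurd h' (by decide))
          have neli : ∀ i : Fin 3, e (Sum.inl i) ≠ e (Sum.inr (1, b)) :=
            fun i => e.injective.ne (fun h => Sum.inl_ne_inr h)
          exact four_le_card _ _ _ _ k0 k1 k2 ky ne01 ne02 (neli 0) ne12 (neli 1) (neli 2)
      rcases hp with ⟨hx, hy⟩ | ⟨hx, hy⟩
      · exact key x y hx.symm hy.symm
      · -- swapped orientation: use symmetry of flipEdge
        have hflipsym : flipEdge (fun a b => rel q (E a) (E b)) x y =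
            flipEdge (fun a b => rel q (E a) (E b)) y x := by
          funext u v
          simp only [flipEdge]
          rw [or_comm]
        obtain ⟨hne, hcard4⟩ := key y x hx.symm hy.symm
        refine ⟨fun h => hne h.symm, ?_⟩
        rw [hflipsym]
        exact hcard4
end

section
/- For every m ≥ 1 such that there exists a tournament on m vertices in which every vertex is a king, there exists a tournament T on 3m+3 vertices, with three distinguished vertices k1, k2, k3 and a partition of the remaining 3m vertices into sets A, B, C each of size m, such that: (i) the kings of T are exactly k1, k2, k3; (ii) for every a ∈ A and c ∈ C, reversing the edge between a and c makes a a king of the resulting tournament; and (iii) after reversing any set of edges between vertices of a subset A' ⊆ A and vertices of C, every vertex of A \ A' still cannot reach k3 by a directed path of length at most 2, every vertex of B cannot reach k1 by a directed path of length at most 2, and every vertex of C cannot reach k2 by a directed path of length at most 2. -/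
/-- `v` reaches `u` by a directed path of length at most 2. -/
def Reach2 {V : Type*} (r : V → V → Prop) (v u : V) : Prop :=
  r v u ∨ ∃ w, r v w ∧ r w u

/-! Auxiliary material -/

def WRel {m : ℕ} (q : Fin m → Fin m → Prop) :
    (Fin 3 ⊕ Fin 3 × Fin m) → (Fin 3 ⊕ Fin 3 × Fin m) → Prop
  | .inl i, .inl i' => i' = i + 1
  | .inl i, .inr p => p.1 ≠ i
  | .inr p, .inl i => p.1 = i
  | .inr p, .inr p' => if p.1 = p'.1 then q p.2 p'.2 else p'.1 = p.1 + 1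

lemma flipEdge_not {V : Type*} {r : V → V → Prop} {x y a b : V}
    (h : ¬ ((a = x ∧ b = y) ∨ (a = y ∧ b = x))) : flipEdge r x y a b ↔ r a b := by
  unfold flipEdge; tauto

lemma flipEdge_yes {V : Type*} {r : V → V → Prop} {x y a b : V}
    (h : (a = x ∧ b = y) ∨ (a = y ∧ b = x)) : flipEdge r x y a b ↔ ¬ r a b := by
  unfold flipEdge; tauto

lemma isTournament_comap {V V' : Type*} (e : V' ≃ V) {r : V' → V' → Prop} {R : V → V → Prop}
    (hr : ∀ x y, r x y ↔ R (e x) (e y)) (hR : IsTournament R) : IsTournament r := by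
  constructor
  · intro v h; exact hR.1 (e v) ((hr v v).1 h)
  · intro u v huv
    rw [hr, hr, hR.2 (e u) (e v) (fun h => huv (e.injective h))]

lemma reach2_comap {V V' : Type*} (e : V' ≃ V) {r : V' → V' → Prop} {R : V → V → Prop}
    (hr : ∀ x y, r x y ↔ R (e x) (e y)) (v u : V') : Reach2 r v u ↔ Reach2 R (e v) (e u) := by
  constructor
  · rintro (h | ⟨w, h1, h2⟩)
    · exact Or.inl ((hr _ _).1 h)
    · exact Or.inr ⟨e w, (hr _ _).1 h1, (hr _ _).1 h2⟩
  · rintro (h | ⟨w, h1, h2⟩)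
    · exact Or.inl ((hr _ _).2 h)
    · exact Or.inr ⟨e.symm w, (hr _ _).2 (by simpa using h1), (hr _ _).2 (by simpa using h2)⟩

lemma isKing_comap {V V' : Type*} (e : V' ≃ V) {r : V' → V' → Prop} {R : V → V → Prop}
    (hr : ∀ x y, r x y ↔ R (e x) (e y)) (v : V') : IsKing r v ↔ IsKing R (e v) := by
  constructor
  · intro h u hu
    rcases h (e.symm u) (fun hh => hu (by rw [← hh, Equiv.apply_symm_apply])) with h1 | ⟨w, h1, h2⟩
    · exact Or.inl (by simpa using (hr _ _).1 h1)
    · exact Or.inr ⟨e w, (hr _ _).1 h1, by simpa using (hr _ _).1 h2⟩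
  · intro h u hu
    rcases h (e u) (fun hh => hu (e.injective hh)) with h1 | ⟨w, h1, h2⟩
    · exact Or.inl ((hr _ _).2 h1)
    · exact Or.inr ⟨e.symm w, (hr _ _).2 (by simpa using h1), (hr _ _).2 (by simpa using h2)⟩

lemma wrel_tournament {m : ℕ} {q : Fin m → Fin m → Prop} (hq : IsTournament q) :
    IsTournament (WRel q) := by
  have key : ∀ i i' : Fin 3, i ≠ i' → (i' = i + 1 ↔ ¬ i = i' + 1) := by decide
  constructor
  · rintro (i | ⟨j, v⟩)
    · simp only [WRel]
      revert i; decide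
    · simp only [WRel, if_pos rfl]
      exact hq.1 v
  · rintro (i | ⟨j, v⟩) (i' | ⟨j', v'⟩) hne <;> simp only [WRel]
    · exact key i i' (fun h => hne (by rw [h]))
    · tauto
    · by_cases h : j = j'
      · subst h
        rw [if_pos rfl, if_pos rfl]
        exact hq.2 v v' (fun h => hne (by rw [h]))
      · rw [if_neg h, if_neg (Ne.symm h)]
        exact key j j' h

lemma noReach2 {m : ℕ} (q : Fin m → Fin m → Prop)
    (R' : (Fin 3 ⊕ Fin 3 × Fin m) → (Fin 3 ⊕ Fin 3 × Fin m) → Prop) (P : Fin m → Prop)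
    (h1 : ∀ z i, R' z (.inl i) ↔ WRel q z (.inl i))
    (h2 : ∀ (j : Fin 3) (v u : Fin m), (j = 0 → ¬ P v) →
      (R' (.inr (j, v)) (.inr (j + 2, u)) ↔ WRel q (.inr (j, v)) (.inr (j + 2, u))))
    (j : Fin 3) (v : Fin m) (hv : j = 0 → ¬ P v) :
    ¬ Reach2 R' (.inr (j, v)) (.inl (j + 2)) := by
  have hj2 : ∀ x : Fin 3, ¬ x = x + 2 := by decide
  have hj3 : ∀ x : Fin 3, ¬ x + 2 = x + 1 := by decide
  rintro (h | ⟨w, haw, hwt⟩)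
  · rw [h1] at h
    exact hj2 j (by simpa only [WRel] using h)
  · rw [h1] at hwt
    match w with
    | .inl i =>
      rw [h1] at haw
      simp only [WRel] at haw hwt
      subst haw
      exact hj3 j hwt
    | .inr (j', u) =>
      simp only [WRel] at hwt
      subst hwt
      rw [h2 j v u hv] at haw
      simp only [WRel] at haw
      rw [if_neg (hj2 j)] at haw
      exact hj3 j haw

lemma wrel_king {m : ℕ} (q : Fin m → Fin m → Prop) (i : Fin 3) : IsKing (WRel q) (.inl i) := by
  have key : ∀ a b : Fin 3, a ≠ b → a ≠ b + 1 → a = b + 1 + 1 := by decide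
  have hne1 : ∀ x : Fin 3, x ≠ x + 1 := by decide
  rintro (i' | ⟨j, u⟩) hu
  · have hne : i' ≠ i := fun h => hu (by rw [h])
    by_cases h : i' = i + 1
    · exact Or.inl (by simpa only [WRel] using h)
    · exact Or.inr ⟨.inl (i + 1), by simp only [WRel], by simpa only [WRel] using key i' i hne h⟩
  · by_cases h : j = i
    · subst h
      exact Or.inr ⟨.inl (j + 1), by simp only [WRel], by simpa only [WRel] using hne1 j⟩
    · exact Or.inl (by simpa only [WRel] using h)

lemma wrel_notKing {m : ℕ} (q : Fin m → Fin m → Prop) (j : Fin 3) (v : Fin m) :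
    ¬ IsKing (WRel q) (.inr (j, v)) := by
  intro h
  have hne : (Sum.inl (j + 2) : Fin 3 ⊕ Fin 3 × Fin m) ≠ .inr (j, v) := by simp
  exact noReach2 q (WRel q) (fun _ => False) (fun _ _ => Iff.rfl) (fun _ _ _ _ => Iff.rfl)
    j v (fun _ h => h) (h (.inl (j + 2)) hne)

lemma flip_king {m : ℕ} {q : Fin m → Fin m → Prop} (hk : ∀ v, IsKing q v) (hm : 0 < m)
    (v w : Fin m) :
    IsKing (flipEdge (WRel q) (Sum.inr (0, v)) (Sum.inr (2, w))) (Sum.inr (0, v)) := by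
  have hb : flipEdge (WRel q) (.inr (0, v)) (.inr (2, w)) (.inr (0, v)) (.inr (1, ⟨0, hm⟩)) := by
    rw [flipEdge_not (by simp)]
    simp [WRel]
  have hac : flipEdge (WRel q) (.inr (0, v)) (.inr (2, w)) (.inr (0, v)) (.inr (2, w)) := by
    rw [flipEdge_yes (Or.inl ⟨rfl, rfl⟩)]
    simp [WRel]
  rintro (i | ⟨j, u⟩) hu
  · fin_cases i
    · exact Or.inl (by rw [flipEdge_not (by simp)]; simp [WRel])
    · exact Or.inr ⟨_, hb, by rw [flipEdge_not (by simp)]; simp [WRel]⟩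
    · exact Or.inr ⟨_, hac, by rw [flipEdge_not (by simp)]; simp [WRel]⟩
  · fin_cases j
    · have huv : u ≠ v := fun h => hu (by subst h; rfl)
      rcases hk v u huv with h | ⟨z, h1, h2⟩
      · exact Or.inl (by rw [flipEdge_not (by simp)]; simpa [WRel] using h)
      · exact Or.inr ⟨.inr (0, z),
          by rw [flipEdge_not (by simp)]; simpa [WRel] using h1,
          by rw [flipEdge_not (by simp)]; simpa [WRel] using h2⟩
    · exact Or.inl (by rw [flipEdge_not (by simp)]; simp [WRel])
    · exact Or.inr ⟨_, hb, by rw [flipEdge_not (by simp)]; simp [WRel]⟩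

theorem hard_instance_exists (m : ℕ) (hm : 1 ≤ m)
    (hall : ∃ r : Fin m → Fin m → Prop, IsTournament r ∧ ∀ v : Fin m, IsKing r v) :
    ∃ (r : Fin (3 * m + 3) → Fin (3 * m + 3) → Prop) (k1 k2 k3 : Fin (3 * m + 3))
      (A B C : Finset (Fin (3 * m + 3))),
      IsTournament r ∧
      k1 ≠ k2 ∧ k1 ≠ k3 ∧ k2 ≠ k3 ∧
      A.card = m ∧ B.card = m ∧ C.card = m ∧
      Disjoint A B ∧ Disjoint A C ∧ Disjoint B C ∧
      (∀ x : Fin (3 * m + 3), x ∈ A ∪ B ∪ C ↔ x ≠ k1 ∧ x ≠ k2 ∧ x ≠ k3) ∧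
      -- (i) the kings of T are exactly k1, k2, k3
      ({v : Fin (3 * m + 3) | IsKing r v} = {k1, k2, k3}) ∧
      -- (ii) flipping any edge between a ∈ A and c ∈ C makes a a king
      (∀ a ∈ A, ∀ c ∈ C, IsKing (flipEdge r a c) a) ∧
      -- (iii) after reversing any set of edges between A' ⊆ A and C
      (∀ A' ⊆ A, ∀ r' : Fin (3 * m + 3) → Fin (3 * m + 3) → Prop,
        IsTournament r' →
        (∀ x y : Fin (3 * m + 3),
          ¬ ((x ∈ A' ∧ y ∈ C) ∨ (x ∈ C ∧ y ∈ A')) → (r' x y ↔ r x y)) →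
        (∀ a ∈ A, a ∉ A' → ¬ Reach2 r' a k3) ∧
        (∀ b ∈ B, ¬ Reach2 r' b k1) ∧
        (∀ c ∈ C, ¬ Reach2 r' c k2)) := by
  obtain ⟨q, hq, hk⟩ := hall
  have hj3 : ∀ x : Fin 3, x = 0 ∨ x = 1 ∨ x = 2 := by decide
  have hcard : Fintype.card (Fin 3 ⊕ Fin 3 × Fin m) = 3 * m + 3 := by
    simp [Fintype.card_sum, Fintype.card_prod]; ring
  let e : Fin (3 * m + 3) ≃ (Fin 3 ⊕ Fin 3 × Fin m) := (Fintype.equivFinOfCardEq hcard).symm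
  set r : Fin (3 * m + 3) → Fin (3 * m + 3) → Prop := fun x y => WRel q (e x) (e y) with hrdef
  have hr : ∀ x y, r x y ↔ WRel q (e x) (e y) := fun _ _ => Iff.rfl
  set Bl : Fin 3 → Finset (Fin (3 * m + 3)) :=
    fun j => Finset.univ.image (fun v : Fin m => e.symm (.inr (j, v))) with hBldef
  have hmem : ∀ (j : Fin 3) (x : Fin (3 * m + 3)),
      x ∈ Bl j ↔ ∃ v : Fin m, e x = .inr (j, v) := by
    intro j x
    simp only [hBldef, Finset.mem_image, Finset.mem_univ, true_and]
    constructor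
    · rintro ⟨v, hv⟩
      exact ⟨v, by rw [← hv, Equiv.apply_symm_apply]⟩
    · rintro ⟨v, hv⟩
      exact ⟨v, by rw [← hv, Equiv.symm_apply_apply]⟩
  have hks : ∀ i : Fin 3, e (e.symm (Sum.inl i)) = Sum.inl i := fun i => e.apply_symm_apply _
  have hcardBl : ∀ j : Fin 3, (Bl j).card = m := by
    intro j
    rw [hBldef]
    rw [Finset.card_image_of_injective _ (fun a b hab => by
      have := e.symm.injective hab
      simpa using this)]
    simp
  have hdisj : ∀ j j' : Fin 3, j ≠ j' → Disjoint (Bl j) (Bl j') := by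
    intro j j' hjj
    rw [Finset.disjoint_left]
    intro x hx hx'
    obtain ⟨v, hv⟩ := (hmem j x).1 hx
    obtain ⟨v', hv'⟩ := (hmem j' x).1 hx'
    rw [hv] at hv'
    have : j = j' ∧ v = v' := by simpa using hv'
    exact hjj this.1
  refine ⟨r, e.symm (.inl 0), e.symm (.inl 1), e.symm (.inl 2), Bl 0, Bl 1, Bl 2,
    isTournament_comap e hr (wrel_tournament hq),
    fun h => by simpa using e.symm.injective h,
    fun h => by simpa using e.symm.injective h,
    fun h => by simpa using e.symm.injective h,
    hcardBl 0, hcardBl 1, hcardBl 2,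
    hdisj 0 1 (by decide), hdisj 0 2 (by decide), hdisj 1 2 (by decide),
    ?_, ?_, ?_, ?_⟩
  · -- union characterization
    intro x
    rw [Finset.mem_union, Finset.mem_union, hmem 0, hmem 1, hmem 2]
    constructor
    · rintro ((⟨v, hv⟩ | ⟨v, hv⟩) | ⟨v, hv⟩) <;>
        refine ⟨fun h => ?_, fun h => ?_, fun h => ?_⟩ <;>
        · rw [h, hks] at hv; exact absurd hv (by simp)
    · rintro ⟨h1, h2, h3⟩
      rcases hx : e x with i | ⟨j, u⟩
      · exfalso
        have hxeq : x = e.symm (.inl i) := by rw [← hx, Equiv.symm_apply_apply]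
        rcases hj3 i with rfl | rfl | rfl
        exacts [h1 hxeq, h2 hxeq, h3 hxeq]
      · rcases hj3 j with rfl | rfl | rfl
        · exact Or.inl (Or.inl ⟨u, rfl⟩)
        · exact Or.inl (Or.inr ⟨u, rfl⟩)
        · exact Or.inr ⟨u, rfl⟩
  · -- kings are exactly k1 k2 k3
    ext x
    simp only [Set.mem_setOf_eq, Set.mem_insert_iff, Set.mem_singleton_iff]
    rw [isKing_comap e hr]
    constructor
    · intro h
      rcases hx : e x with i | ⟨j, u⟩
      · have hxeq : x = e.symm (.inl i) := by rw [← hx, Equiv.symm_apply_apply]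
        rcases hj3 i with rfl | rfl | rfl
        exacts [Or.inl hxeq, Or.inr (Or.inl hxeq), Or.inr (Or.inr hxeq)]
      · rw [hx] at h
        exact absurd h (wrel_notKing q j u)
    · rintro (h | h | h)
      · rw [h, hks]; exact wrel_king q 0
      · rw [h, hks]; exact wrel_king q 1
      · rw [h, hks]; exact wrel_king q 2
  · -- (ii) flips
    intro a ha c hc
    obtain ⟨v, hv⟩ := (hmem 0 a).1 ha
    obtain ⟨w, hw⟩ := (hmem 2 c).1 hc
    have hfr : ∀ x y, flipEdge r a c x y ↔ flipEdge (WRel q) (e a) (e c) (e x) (e y) := by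
      intro x y
      unfold flipEdge
      simp only [Equiv.apply_eq_iff_eq]
      exact Iff.rfl
    rw [isKing_comap e hfr, hv, hw]
    exact flip_king hk hm v w
  · -- (iii)
    intro A' hA' r' _ hagree
    set R' : (Fin 3 ⊕ Fin 3 × Fin m) → (Fin 3 ⊕ Fin 3 × Fin m) → Prop :=
      fun z z' => r' (e.symm z) (e.symm z') with hR'def
    have hr' : ∀ x y, r' x y ↔ R' (e x) (e y) := by
      intro x y
      show r' x y ↔ r' (e.symm (e x)) (e.symm (e y))
      rw [Equiv.symm_apply_apply, Equiv.symm_apply_apply]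
    set P : Fin m → Prop := fun v => e.symm (Sum.inr (0, v)) ∈ A' with hPdef
    have h1 : ∀ z i, R' z (.inl i) ↔ WRel q z (.inl i) := by
      intro z i
      have hcond : ¬ ((e.symm z ∈ A' ∧ e.symm (Sum.inl i) ∈ Bl 2) ∨
          (e.symm z ∈ Bl 2 ∧ e.symm (Sum.inl i) ∈ A')) := by
        rintro (⟨-, hC⟩ | ⟨-, hA⟩)
        · obtain ⟨u, hu⟩ := (hmem 2 _).1 hC
          rw [hks] at hu; exact absurd hu (by simp)
        · obtain ⟨u, hu⟩ := (hmem 0 _).1 (hA' hA)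
          rw [hks] at hu; exact absurd hu (by simp)
      have h := hagree (e.symm z) (e.symm (Sum.inl i)) hcond
      rw [hr, Equiv.apply_symm_apply, Equiv.apply_symm_apply] at h
      exact h
    have h2 : ∀ (j : Fin 3) (v u : Fin m), (j = 0 → ¬ P v) →
        (R' (.inr (j, v)) (.inr (j + 2, u)) ↔ WRel q (.inr (j, v)) (.inr (j + 2, u))) := by
      intro j v u hv
      have hcond : ¬ ((e.symm (Sum.inr (j, v)) ∈ A' ∧ e.symm (Sum.inr (j + 2, u)) ∈ Bl 2) ∨
          (e.symm (Sum.inr (j, v)) ∈ Bl 2 ∧ e.symm (Sum.inr (j + 2, u)) ∈ A')) := by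
        rintro (⟨hxA, -⟩ | ⟨hxC, hyA⟩)
        · obtain ⟨u0, hu0⟩ := (hmem 0 _).1 (hA' hxA)
          rw [Equiv.apply_symm_apply] at hu0
          obtain ⟨hj0, hv0⟩ : j = 0 ∧ v = u0 := by simpa using hu0
          subst hj0; subst hv0
          exact hv rfl hxA
        · obtain ⟨u0, hu0⟩ := (hmem 2 _).1 hxC
          rw [Equiv.apply_symm_apply] at hu0
          obtain ⟨u1, hu1⟩ := (hmem 0 _).1 (hA' hyA)
          rw [Equiv.apply_symm_apply] at hu1
          have hje : j = 2 ∧ v = u0 := by simpa using hu0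
          have hj20 : j + 2 = 0 ∧ u = u1 := by simpa using hu1
          have h2j := hje.1
          subst h2j
          exact absurd hj20.1 (by decide)
      have h := hagree (e.symm (Sum.inr (j, v))) (e.symm (Sum.inr (j + 2, u))) hcond
      rw [hr, Equiv.apply_symm_apply, Equiv.apply_symm_apply] at h
      exact h
    refine ⟨?_, ?_, ?_⟩
    · intro a ha haA'
      obtain ⟨v, hv⟩ := (hmem 0 a).1 ha
      rw [reach2_comap e hr' a _, hv, hks]
      have hPv : ¬ P v := by
        rw [hPdef]
        simp only
        rw [show e.symm (Sum.inr (0, v)) = a by rw [← hv, Equiv.symm_apply_apply]]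
        exact haA'
      have := noReach2 q R' P h1 h2 0 v (fun _ => hPv)
      simpa using this
    · intro b hb
      obtain ⟨v, hv⟩ := (hmem 1 b).1 hb
      rw [reach2_comap e hr' b _, hv, hks]
      have := noReach2 q R' P h1 h2 1 v (fun h => absurd h (by decide))
      simpa using this
    · intro c hc
      obtain ⟨v, hv⟩ := (hmem 2 c).1 hc
      rw [reach2_comap e hr' c _, hv, hks]
      have := noReach2 q R' P h1 h2 2 v (fun h => absurd h (by decide))
      simpa using this
end
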